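/- The accelerated proximal gradient (APG) iterates converge in function value to the global minimum of f at rate O(1/t²): for every t ≥ 1, f(w^{(t)}) − f(w*) ≤ 2b ‖w^{(0)} − w*‖² / (t + 1)², where w* = (Q + βI)⁻¹k is the unique minimizer of f. -/

import Mathlib

open Matrix

private lemma rayleigh_bound {n : ℕ} {Q : Matrix (Fin n) (Fin n) ℝ} (hQ : Q.PosSemidef)
    {σmax : ℝ} (hub : ∀ i, hQ.isHermitian.eigenvalues i ≤ σmax) :
    ∀ x : Fin n → ℝ, x ⬝ᵥ Q *ᵥ x ≤ σmax * (x ⬝ᵥ x) := by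
  have hH := hQ.isHermitian
  have hpsd : ((σmax • 1 - Q) : Matrix (Fin n) (Fin n) ℝ).PosSemidef := by
    have hU : (hH.eigenvectorUnitary : Matrix (Fin n) (Fin n) ℝ) *
        star (hH.eigenvectorUnitary : Matrix (Fin n) (Fin n) ℝ) = 1 :=
      (Matrix.mem_unitaryGroup_iff).mp (hH.eigenvectorUnitary).2
    have h1 : σmax • (1 : Matrix (Fin n) (Fin n) ℝ) - Q =
        (hH.eigenvectorUnitary : Matrix (Fin n) (Fin n) ℝ) *
          diagonal (fun i => σmax - hH.eigenvalues i) *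
          star (hH.eigenvectorUnitary : Matrix (Fin n) (Fin n) ℝ) := by
      have h2 : diagonal (fun i => σmax - hH.eigenvalues i) =
          σmax • (1 : Matrix (Fin n) (Fin n) ℝ) -
            diagonal (RCLike.ofReal ∘ hH.eigenvalues) := by
        rw [smul_one_eq_diagonal, ← diagonal_sub]; rfl
      rw [h2, Matrix.mul_sub, Matrix.sub_mul, ← (hH.spectral_theorem.trans (Unitary.conjStarAlgAut_apply _ _)),
        mul_smul_comm, mul_one, smul_mul_assoc, hU]
    rw [h1, Matrix.star_eq_conjTranspose]
    exact (posSemidef_diagonal_iff.mpr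
      (fun i => sub_nonneg.mpr (hub i))).mul_mul_conjTranspose_same _
  intro x
  have h := hpsd.dotProduct_mulVec_nonneg x
  simp only [star_trivial, sub_mulVec, dotProduct_sub, smul_mulVec, one_mulVec,
    dotProduct_smul, smul_eq_mul] at h
  linarith

private lemma dot_self_nonneg' {n : ℕ} (x : Fin n → ℝ) : 0 ≤ x ⬝ᵥ x := by
  simpa using dotProduct_star_self_nonneg x

set_option maxHeartbeats 1000000 in
/-- The accelerated proximal gradient (APG) iterates converge in function value
to the global minimum of f at rate O(1/t²): for every t ≥ 1,
f(w^{(t)}) − f(w*) ≤ 2b‖w^{(0)} − w*‖²/(t + 1)², where w* = (Q + βI)⁻¹k,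
b ≥ σ_max(Q) + β is a Lipschitz constant for ∇f, and ‖x‖² = xᵀx is the
squared Euclidean norm. -/
theorem apg_quadratic_convergence
    (n : ℕ) (Q : Matrix (Fin n) (Fin n) ℝ) (hQ : Q.PosSemidef)
    (β : ℝ) (hβ : 0 < β) (k : Fin n → ℝ)
    (f : (Fin n → ℝ) → ℝ)
    (hf : ∀ w, f w = (1 / 2) * (w ⬝ᵥ (Q + β • 1).mulVec w) - w ⬝ᵥ k)
    (σmax : ℝ)
    (hσmaxmem : ∃ i, hQ.isHermitian.eigenvalues i = σmax)
    (hσmaxub : ∀ i, hQ.isHermitian.eigenvalues i ≤ σmax)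
    (b : ℝ) (hb : σmax + β ≤ b)
    (w v : ℕ → (Fin n → ℝ)) (d : ℕ → ℝ)
    (hinit : w 0 = v 0) (hd0 : d 0 = 1)
    (hwstep : ∀ t, w (t + 1) = v t - b⁻¹ • ((Q + β • 1).mulVec (v t) - k))
    (hdstep : ∀ t, d (t + 1) = (1 + Real.sqrt (1 + 4 * (d t) ^ 2)) / 2)
    (hvstep : ∀ t, v (t + 1) = w (t + 1) + ((d t - 1) / d (t + 1)) • (w (t + 1) - w t))
    (wstar : Fin n → ℝ) (hwstar : wstar = (Q + β • 1)⁻¹.mulVec k) :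
    ∀ t : ℕ, 1 ≤ t →
      f (w t) - f wstar
        ≤ 2 * b * ((w 0 - wstar) ⬝ᵥ (w 0 - wstar)) / ((t : ℝ) + 1) ^ 2 := by
  set A := Q + β • (1 : Matrix (Fin n) (Fin n) ℝ) with hA
  have hσ0 : 0 ≤ σmax := by
    obtain ⟨i, hi⟩ := hσmaxmem
    exact hi ▸ hQ.eigenvalues_nonneg i
  have hbpos : 0 < b := lt_of_lt_of_le (by linarith) hb
  have hApos : A.PosDef := by
    apply Matrix.PosDef.posSemidef_add hQ
    rw [smul_one_eq_diagonal]
    exact posDef_diagonal_iff.mpr fun i => hβ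
  have hAH : ∀ x y : Fin n → ℝ, x ⬝ᵥ A *ᵥ y = y ⬝ᵥ A *ᵥ x := by
    intro x y
    have hsym : Aᵀ = A := by
      have h := hApos.isHermitian
      rwa [Matrix.IsHermitian, conjTranspose_eq_transpose_of_trivial] at h
    rw [Matrix.dotProduct_mulVec x A y, ← Matrix.mulVec_transpose, hsym, dotProduct_comm]
  have hBpos : ∀ x : Fin n → ℝ, 0 ≤ x ⬝ᵥ A *ᵥ x := by
    intro x
    simpa using hApos.posSemidef.dotProduct_mulVec_nonneg x
  have hBle : ∀ x : Fin n → ℝ, x ⬝ᵥ A *ᵥ x ≤ b * (x ⬝ᵥ x) := by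
    intro x
    have h1 := rayleigh_bound hQ hσmaxub x
    have h2 : x ⬝ᵥ A *ᵥ x = x ⬝ᵥ Q *ᵥ x + β * (x ⬝ᵥ x) := by
      simp [hA, Matrix.add_mulVec, dotProduct_add, smul_mulVec, one_mulVec,
        dotProduct_smul, smul_eq_mul]
    have h3 : 0 ≤ x ⬝ᵥ x := dot_self_nonneg' x
    nlinarith
  have hk : A *ᵥ wstar = k := by
    rw [hwstar, mulVec_mulVec, Matrix.mul_nonsing_inv _ (isUnit_iff_ne_zero.mpr
      (ne_of_gt hApos.det_pos)), one_mulVec]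
  have hfd : ∀ x, f x - f wstar = (1/2) * ((x - wstar) ⬝ᵥ A *ᵥ (x - wstar)) := by
    intro x
    have e1 : (x - wstar) ⬝ᵥ A *ᵥ (x - wstar)
        = x ⬝ᵥ A *ᵥ x - 2 * (x ⬝ᵥ A *ᵥ wstar) + wstar ⬝ᵥ A *ᵥ wstar := by
      rw [Matrix.mulVec_sub, dotProduct_sub, sub_dotProduct, sub_dotProduct, hAH wstar x]
      ring
    have e2 : x ⬝ᵥ k = x ⬝ᵥ A *ᵥ wstar := by rw [hk]
    have e3 : wstar ⬝ᵥ k = wstar ⬝ᵥ A *ᵥ wstar := by rw [hk]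
    rw [hf x, hf wstar, e1, e2, e3]
    ring
  -- core inequality
  have core : ∀ (t : ℕ) (x : Fin n → ℝ),
      f (w (t+1)) - f x ≤ b * ((v t - w (t+1)) ⬝ᵥ (v t - x))
        - (b/2) * ((v t - w (t+1)) ⬝ᵥ (v t - w (t+1))) := by
    intro t x
    have hpA : A *ᵥ (v t - wstar) = b • (v t - w (t+1)) := by
      have h1 : v t - w (t+1) = b⁻¹ • (A *ᵥ v t - k) := by
        rw [hwstep t, sub_sub_cancel]
      rw [h1, smul_smul, mul_inv_cancel₀ (ne_of_gt hbpos), one_smul,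
        Matrix.mulVec_sub, hk]
    set p := v t - w (t+1) with hp
    set u := v t - wstar with hu
    set y := x - wstar with hy
    have hup : w (t+1) - wstar = u - p := by rw [hu, hp]; abel
    have hxy : v t - x = u - y := by rw [hu, hy]; abel
    have e1 := hfd (w (t+1))
    rw [hup] at e1
    have e2 := hfd x
    have X0 : p ⬝ᵥ A *ᵥ u = b * (p ⬝ᵥ p) := by
      rw [hpA, dotProduct_smul, smul_eq_mul]
    have X1 : (u - p) ⬝ᵥ A *ᵥ (u - p)
        = u ⬝ᵥ A *ᵥ u - 2 * (b * (p ⬝ᵥ p)) + p ⬝ᵥ A *ᵥ p := by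
      simp only [Matrix.mulVec_sub, dotProduct_sub, sub_dotProduct]
      rw [hAH u p, X0]
      ring
    have X0' : (y - u) ⬝ᵥ A *ᵥ u = b * (p ⬝ᵥ (y - u)) := by
      rw [hpA, dotProduct_smul, smul_eq_mul, dotProduct_comm]
    have X2 : y ⬝ᵥ A *ᵥ y = u ⬝ᵥ A *ᵥ u + 2 * (b * (p ⬝ᵥ (y - u)))
        + (y - u) ⬝ᵥ A *ᵥ (y - u) := by
      have hyu : y = u + (y - u) := by abel
      conv_lhs => rw [hyu]
      simp only [Matrix.mulVec_add, dotProduct_add, add_dotProduct]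
      rw [hAH u (y - u), X0']
      ring
    have hq1 : 0 ≤ (y - u) ⬝ᵥ A *ᵥ (y - u) := hBpos _
    have hq2 : p ⬝ᵥ A *ᵥ p ≤ b * (p ⬝ᵥ p) := hBle p
    have hd1 : p ⬝ᵥ (y - u) = p ⬝ᵥ y - p ⬝ᵥ u := dotProduct_sub p y u
    have hd2 : p ⬝ᵥ (u - y) = p ⬝ᵥ u - p ⬝ᵥ y := dotProduct_sub p u y
    have hsplit : f (w (t+1)) - f x = (f (w (t+1)) - f wstar) - (f x - f wstar) := by
      ring
    rw [hsplit, e1, e2, hxy, X1, X2, hd2]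
    nlinarith [hq1, hq2, hd1]
  -- facts about d
  have hd1le : ∀ t, 1 ≤ d t := by
    intro t
    cases t with
    | zero => rw [hd0]
    | succ s =>
      rw [hdstep s]
      have h1 : 1 ≤ Real.sqrt (1 + 4 * d s ^ 2) := by
        have h2 : Real.sqrt 1 ≤ Real.sqrt (1 + 4 * d s ^ 2) :=
          Real.sqrt_le_sqrt (by nlinarith [sq_nonneg (d s)])
        rwa [Real.sqrt_one] at h2
      linarith
  have hdsq : ∀ t, d (t+1)^2 - d (t+1) = d t ^ 2 := by
    intro t
    have h1 : 2 * d (t+1) - 1 = Real.sqrt (1 + 4 * d t ^ 2) := by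
      rw [hdstep t]; ring
    have h2 : (2 * d (t+1) - 1)^2 = 1 + 4 * d t ^2 := by
      rw [h1, Real.sq_sqrt (by nlinarith [sq_nonneg (d t)])]
    nlinarith [h2]
  have hdge : ∀ t : ℕ, ((t:ℝ) + 2)/2 ≤ d t := by
    intro t
    induction t with
    | zero => rw [hd0]; norm_num
    | succ s ih =>
      rw [hdstep s]
      have hds : 0 ≤ d s := le_trans zero_le_one (hd1le s)
      have h1 : 2 * d s ≤ Real.sqrt (1 + 4 * d s ^2) := by
        rw [show 2 * d s = Real.sqrt ((2 * d s)^2) from (Real.sqrt_sq (by linarith)).symm]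
        apply Real.sqrt_le_sqrt
        nlinarith
      push_cast
      linarith
  -- the Lyapunov sequence
  obtain ⟨uu, huu⟩ : ∃ uu : ℕ → (Fin n → ℝ), ∀ t,
      uu t = d t • (w (t+1) - wstar) - (d t - 1) • (w t - wstar) := ⟨_, fun _ => rfl⟩
  have base : 2 * (d 0)^2 * (f (w 1) - f wstar) + b * (uu 0 ⬝ᵥ uu 0)
      ≤ b * ((w 0 - wstar) ⬝ᵥ (w 0 - wstar)) := by
    have h := core 0 wstar
    rw [← hinit] at h
    have huu0 : uu 0 = w 1 - wstar := by
      rw [huu 0, hd0]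
      module
    rw [huu0, hd0]
    have hexp : (w 1 - wstar) ⬝ᵥ (w 1 - wstar)
        = (w 0 - wstar) ⬝ᵥ (w 0 - wstar)
          - 2 * ((w 0 - w 1) ⬝ᵥ (w 0 - wstar)) + (w 0 - w 1) ⬝ᵥ (w 0 - w 1) := by
      have h1 : w 1 - wstar = (w 0 - wstar) - (w 0 - w 1) := by abel
      rw [h1]
      simp only [dotProduct_sub, sub_dotProduct, dotProduct_comm]
      ring
    rw [hexp]
    nlinarith [h]
  have step : ∀ t : ℕ,
      2 * (d (t+1))^2 * (f (w (t+1+1)) - f wstar) + b * (uu (t+1) ⬝ᵥ uu (t+1))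
        ≤ 2 * (d t)^2 * (f (w (t+1)) - f wstar) + b * (uu t ⬝ᵥ uu t) := by
    intro t
    have hδ1 : 1 ≤ d (t+1) := hd1le (t+1)
    have hδpos : 0 < d (t+1) := lt_of_lt_of_le one_pos hδ1
    have h1 := core (t+1) (w (t+1))
    have h2 := core (t+1) wstar
    set δ := d (t+1) with hδdef
    set p := v (t+1) - w (t+1+1) with hp
    have I1 : (δ - 1) • (v (t+1) - w (t+1)) + (v (t+1) - wstar) = uu t := by
      rw [huu t, hvstep t, ← hδdef]
      match_scalars <;> field_simp <;> ring
    have I2 : uu t - δ • p = uu (t+1) := by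
      rw [huu t, huu (t+1), hp, hvstep t, ← hδdef]
      match_scalars <;> field_simp <;> ring
    have S1 : (δ - 1) * (p ⬝ᵥ (v (t+1) - w (t+1))) + (p ⬝ᵥ (v (t+1) - wstar))
        = p ⬝ᵥ uu t := by
      rw [← I1, dotProduct_add, dotProduct_smul, smul_eq_mul]
    have S2 : uu (t+1) ⬝ᵥ uu (t+1) = uu t ⬝ᵥ uu t - 2 * δ * (p ⬝ᵥ uu t)
        + δ^2 * (p ⬝ᵥ p) := by
      rw [← I2]
      simp only [dotProduct_sub, sub_dotProduct, dotProduct_smul, smul_dotProduct,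
        smul_eq_mul]
      rw [dotProduct_comm (uu t) p]
      ring
    have m1 := mul_le_mul_of_nonneg_left h1 (sub_nonneg.mpr hδ1)
    have m3 := mul_le_mul_of_nonneg_left (add_le_add m1 h2) hδpos.le
    rw [S2, ← hdsq t, ← hδdef, ← S1]
    nlinarith [m3]
  have mono : ∀ t : ℕ,
      2 * (d t)^2 * (f (w (t+1)) - f wstar) + b * (uu t ⬝ᵥ uu t)
        ≤ b * ((w 0 - wstar) ⬝ᵥ (w 0 - wstar)) := by
    intro t
    induction t with
    | zero => exact base
    | succ s ih => exact le_trans (step s) ih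
  -- conclusion
  intro t ht
  obtain ⟨s, rfl⟩ : ∃ s, t = s + 1 := ⟨t - 1, (Nat.succ_pred_eq_of_pos ht).symm⟩
  have hm := mono s
  have hN : 0 ≤ uu s ⬝ᵥ uu s := dot_self_nonneg' _
  have hbN : 0 ≤ b * (uu s ⬝ᵥ uu s) := mul_nonneg hbpos.le hN
  have hF0 : 0 ≤ f (w (s+1)) - f wstar := by
    rw [hfd]
    exact mul_nonneg (by norm_num) (hBpos _)
  have hds := hdge s
  have hds0 : 0 ≤ ((s:ℝ) + 2)/2 := by positivity
  have h4 : ((s:ℝ)+2)^2 ≤ 4 * (d s)^2 := by nlinarith [hds, hds0]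
  have hcast : ((s+1 : ℕ) : ℝ) + 1 = (s:ℝ) + 2 := by push_cast; ring
  rw [hcast, le_div_iff₀ (by positivity)]
  have m := mul_le_mul_of_nonneg_left h4 hF0
  nlinarith [m, hm, hbN]
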